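/- Let p be a prime, G a topological group, and f : G → ℚ_p a continuous quasimorphism with defect D(f) = 1. Let π : ℚ_p → ℚ_p/ℤ_p denote the quotient homomorphism of additive groups. Then π∘f : G → ℚ_p/ℤ_p is a group homomorphism whose kernel U = f⁻¹(ℤ_p) is an open normal subgroup of G, and the following are equivalent: (1) f is unbounded; (2) π∘f is surjective; (3) π∘f induces a group isomorphism between G/U and ℚ_p/ℤ_p. -/

import Mathlib

/-- The ring of integers `ℤ_p`, viewed as an additive subgroup (the closed unit ball) of
`ℚ_p`. -/
def padicUnitBall (p : ℕ) [Fact p.Prime] : AddSubgroup ℚ_[p] where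
  carrier := {x : ℚ_[p] | ‖x‖ ≤ 1}
  zero_mem' := by simp
  add_mem' := by
    intro a b ha hb
    exact le_trans (Padic.nonarchimedean a b) (max_le ha hb)
  neg_mem' := by
    intro a ha
    simpa using ha

/-- The quotient homomorphism `ℚ_p → ℚ_p/ℤ_p` onto the Prüfer `p`-group. -/
noncomputable def padicPrueferProj (p : ℕ) [Fact p.Prime] : ℚ_[p] →+ ℚ_[p] ⧸ padicUnitBall p :=
  QuotientAddGroup.mk' (padicUnitBall p)

lemma padicPrueferProj_eq_iff (p : ℕ) [Fact p.Prime] (x y : ℚ_[p]) :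
    padicPrueferProj p x = padicPrueferProj p y ↔ ‖x - y‖ ≤ 1 := by
  show (QuotientAddGroup.mk x : ℚ_[p] ⧸ padicUnitBall p) = QuotientAddGroup.mk y ↔ _
  rw [QuotientAddGroup.eq_iff_sub_mem]
  rfl

lemma padic_exists_int_close (p : ℕ) [Fact p.Prime] (a x : ℚ_[p])
    (hxa : ‖x‖ ≤ ‖a‖) (ha : 1 < ‖a‖) : ∃ k : ℤ, ‖x - (k : ℚ_[p]) * a‖ ≤ 1 := by
  have hp1 : (1 : ℝ) < p := by exact_mod_cast (Fact.out : p.Prime).one_lt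
  have ha0 : a ≠ 0 := by
    intro h; rw [h, norm_zero] at ha; linarith
  have ht : ‖x / a‖ ≤ 1 := by
    rw [norm_div]
    exact div_le_one_of_le₀ hxa (norm_nonneg a)
  obtain ⟨m, hm⟩ := pow_unbounded_of_one_lt (R := ℝ) ‖a‖ hp1
  set t : ℤ_[p] := ⟨x / a, ht⟩ with htdef
  refine ⟨(t.appr m : ℤ), ?_⟩
  have hspec : ‖t - (t.appr m : ℤ_[p])‖ ≤ (p : ℝ) ^ (-(m : ℤ)) :=
    (PadicInt.norm_le_pow_iff_mem_span_pow _ m).mpr (PadicInt.appr_spec m t)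
  have hnorm : ‖x / a - ((t.appr m : ℤ) : ℚ_[p])‖ ≤ (p : ℝ) ^ (-(m : ℤ)) := by
    have : ((t - (t.appr m : ℤ_[p]) : ℤ_[p]) : ℚ_[p]) = x / a - ((t.appr m : ℤ) : ℚ_[p]) := by
      rw [PadicInt.coe_sub]
      congr 1 <;> simp [htdef]
    calc ‖x / a - ((t.appr m : ℤ) : ℚ_[p])‖ = ‖((t - (t.appr m : ℤ_[p]) : ℤ_[p]) : ℚ_[p])‖ := by
          rw [this]
      _ = ‖t - (t.appr m : ℤ_[p])‖ := rfl
      _ ≤ (p : ℝ) ^ (-(m : ℤ)) := hspec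
  have hxk : x - ((t.appr m : ℤ) : ℚ_[p]) * a = a * (x / a - ((t.appr m : ℤ) : ℚ_[p])) := by
    field_simp
  rw [hxk, norm_mul]
  calc ‖a‖ * ‖x / a - ((t.appr m : ℤ) : ℚ_[p])‖ ≤ (p : ℝ) ^ m * (p : ℝ) ^ (-(m : ℤ)) := by
        apply mul_le_mul (le_of_lt hm) hnorm (norm_nonneg _)
        positivity
    _ = 1 := by
        rw [← zpow_natCast (p : ℝ) m, ← zpow_add₀ (by linarith : (p:ℝ) ≠ 0)]
        simp

theorem quasimorphism_padic_classification (p : ℕ) [Fact p.Prime]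
    (G : Type*) [Group G] [TopologicalSpace G] [IsTopologicalGroup G]
    (f : G → ℚ_[p]) (hf : Continuous f)
    (hdef : (⨆ q : G × G, ‖f (q.1 * q.2) - f q.1 - f q.2‖) = 1) :
    (∀ x y : G, padicPrueferProj p (f (x * y)) =
      padicPrueferProj p (f x) + padicPrueferProj p (f y)) ∧
    (∃ U : Subgroup G, (U : Set G) = {g : G | ‖f g‖ ≤ 1} ∧ U.Normal ∧ IsOpen (U : Set G)) ∧
    ((¬ ∃ C : ℝ, ∀ g : G, ‖f g‖ ≤ C) ↔
      Function.Surjective fun g : G => padicPrueferProj p (f g)) ∧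
    ((Function.Surjective fun g : G => padicPrueferProj p (f g)) ↔
      ∀ (U : Subgroup G) [U.Normal], (U : Set G) = {g : G | ‖f g‖ ≤ 1} →
        ∃ e : (G ⧸ U) ≃* Multiplicative (ℚ_[p] ⧸ padicUnitBall p),
          ∀ g : G, e (QuotientGroup.mk g) = Multiplicative.ofAdd (padicPrueferProj p (f g))) := by
  have hp1 : (1 : ℝ) < p := by exact_mod_cast (Fact.out : p.Prime).one_lt
  -- the defect bound
  have hA : ∀ x y : G, ‖f (x * y) - f x - f y‖ ≤ 1 := by
    intro x y
    by_cases hb : BddAbove (Set.range fun q : G × G => ‖f (q.1 * q.2) - f q.1 - f q.2‖)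
    · exact hdef ▸ le_ciSup hb (x, y)
    · rw [Real.iSup_of_not_bddAbove hb] at hdef; norm_num at hdef
  have hone : ‖f 1‖ ≤ 1 := by
    have := hA 1 1
    simpa using this
  -- homomorphism property
  have hhom : ∀ x y : G, padicPrueferProj p (f (x * y)) =
      padicPrueferProj p (f x) + padicPrueferProj p (f y) := by
    intro x y
    rw [← map_add, padicPrueferProj_eq_iff]
    calc ‖f (x * y) - (f x + f y)‖ = ‖f (x * y) - f x - f y‖ := by ring_nf
      _ ≤ 1 := hA x y
  -- the homomorphism to the (multiplicative) Prüfer group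
  let φ : G →* Multiplicative (ℚ_[p] ⧸ padicUnitBall p) :=
    { toFun := fun g => Multiplicative.ofAdd (padicPrueferProj p (f g))
      map_one' := by
        have h0 : padicPrueferProj p (f 1) = padicPrueferProj p 0 := by
          rw [padicPrueferProj_eq_iff]; simpa using hone
        simp [h0]
      map_mul' := fun x y => by
        show Multiplicative.ofAdd _ = Multiplicative.ofAdd _ * Multiplicative.ofAdd _
        rw [hhom x y]; rfl }
  have hφ : ∀ g : G, φ g = Multiplicative.ofAdd (padicPrueferProj p (f g)) := fun g => rfl
  have hker : ∀ g : G, φ g = 1 ↔ ‖f g‖ ≤ 1 := by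
    intro g
    rw [hφ]
    constructor
    · intro h
      have : padicPrueferProj p (f g) = padicPrueferProj p 0 := by
        simpa using congrArg Multiplicative.toAdd h
      simpa using (padicPrueferProj_eq_iff p _ _).mp this
    · intro h
      have : padicPrueferProj p (f g) = padicPrueferProj p 0 := by
        rw [padicPrueferProj_eq_iff]; simpa using h
      rw [map_zero] at this
      rw [this]
      rfl
  have hUcar : (φ.ker : Set G) = {g : G | ‖f g‖ ≤ 1} := Set.ext fun g => hker g
  -- openness
  have hopen : IsOpen {x : ℚ_[p] | ‖x‖ ≤ 1} := by
    rw [Metric.isOpen_iff]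
    intro x hx
    refine ⟨1, one_pos, fun y hy => ?_⟩
    have h1 : ‖y - x‖ ≤ 1 := le_of_lt (by simpa [dist_eq_norm] using hy)
    calc ‖y‖ = ‖(y - x) + x‖ := by ring_nf
      _ ≤ max ‖y - x‖ ‖x‖ := Padic.nonarchimedean _ _
      _ ≤ 1 := max_le h1 hx
  -- unbounded → surjective
  have hsurj_of_unbdd : (¬ ∃ C : ℝ, ∀ g : G, ‖f g‖ ≤ C) →
      Function.Surjective (fun g : G => padicPrueferProj p (f g)) := by
    intro hub y
    push_neg at hub
    obtain ⟨x, rfl⟩ : ∃ x : ℚ_[p], padicPrueferProj p x = y := QuotientAddGroup.mk'_surjective _ y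
    obtain ⟨g, hg⟩ := hub (max ‖x‖ 1)
    have hga : 1 < ‖f g‖ := lt_of_le_of_lt (le_max_right _ _) hg
    obtain ⟨k, hk⟩ := padic_exists_int_close p (f g) x
      (le_of_lt (lt_of_le_of_lt (le_max_left _ _) hg)) hga
    refine ⟨g ^ k, ?_⟩
    have h1 : φ (g ^ k) = φ g ^ k := map_zpow φ g k
    have h2 : padicPrueferProj p (f (g ^ k)) = padicPrueferProj p ((k : ℚ_[p]) * f g) := by
      have h3 := congrArg Multiplicative.toAdd h1
      rw [hφ, hφ, toAdd_zpow] at h3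
      simp only [toAdd_ofAdd] at h3
      rw [h3, ← map_zsmul]
      congr 1
    show padicPrueferProj p (f (g ^ k)) = padicPrueferProj p x
    rw [h2, padicPrueferProj_eq_iff]
    rw [norm_sub_rev]
    exact hk
  -- surjective → unbounded
  have hunbdd_of_surj : Function.Surjective (fun g : G => padicPrueferProj p (f g)) →
      ¬ ∃ C : ℝ, ∀ g : G, ‖f g‖ ≤ C := by
    rintro hs ⟨C, hC⟩
    obtain ⟨N, hN⟩ := pow_unbounded_of_one_lt (R := ℝ) (max C 1) hp1
    set q : ℚ_[p] := (p : ℚ_[p]) ^ (-(N : ℤ)) with hq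
    have hqnorm : ‖q‖ = (p : ℝ) ^ (N : ℤ) := by
      rw [hq, Padic.norm_p_zpow]; simp
    have hqN : (p : ℝ) ^ (N : ℤ) = (p : ℝ) ^ N := zpow_natCast _ _
    have hbig : max C 1 < ‖q‖ := by rw [hqnorm, hqN]; exact hN
    obtain ⟨g, hg⟩ := hs (padicPrueferProj p q)
    have hmem : ‖f g - q‖ ≤ 1 := (padicPrueferProj_eq_iff p _ _).mp hg
    have hne : ‖q‖ ≠ ‖f g - q‖ := by
      intro h
      rw [← h] at hmem
      have : (1:ℝ) < ‖q‖ := lt_of_le_of_lt (le_max_right C 1) hbig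
      linarith
    have hfg : ‖f g‖ = ‖q‖ := by
      have : ‖q + (f g - q)‖ = max ‖q‖ ‖f g - q‖ := Padic.add_eq_max_of_ne hne
      rw [show q + (f g - q) = f g by ring] at this
      rw [this, max_eq_left]
      calc ‖f g - q‖ ≤ 1 := hmem
        _ ≤ max C 1 := le_max_right _ _
        _ ≤ ‖q‖ := le_of_lt hbig
    have := hC g
    rw [hfg] at this
    have : max C 1 < C := lt_of_lt_of_le hbig this
    have : C < C := lt_of_le_of_lt (le_max_left C 1) this
    exact lt_irrefl _ this
  refine ⟨hhom, ⟨φ.ker, hUcar, φ.normal_ker, ?_⟩, ⟨hsurj_of_unbdd, hunbdd_of_surj⟩, ?_, ?_⟩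
  · rw [hUcar]
    exact hopen.preimage hf
  · -- surjective → isomorphism
    intro hs U hUnormal hU
    have hφs : Function.Surjective φ := by
      intro y
      obtain ⟨g, hg⟩ := hs y.toAdd
      have hg' : padicPrueferProj p (f g) = y.toAdd := hg
      exact ⟨g, by rw [hφ g, hg']; exact ofAdd_toAdd y⟩
    have hUker : U = φ.ker := by
      ext g
      rw [← SetLike.mem_coe, hU]
      show ‖f g‖ ≤ 1 ↔ g ∈ φ.ker
      rw [MonoidHom.mem_ker]
      exact (hker g).symm
    refine ⟨(QuotientGroup.quotientMulEquivOfEq hUker).trans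
      (QuotientGroup.quotientKerEquivOfSurjective φ hφs), fun g => ?_⟩
    rfl
  · -- isomorphism → surjective
    intro h y
    obtain ⟨e, he⟩ := h φ.ker hUcar
    obtain ⟨quo, hquo⟩ := e.surjective (Multiplicative.ofAdd y)
    obtain ⟨g, rfl⟩ := QuotientGroup.mk_surjective quo
    refine ⟨g, ?_⟩
    have := (he g).symm.trans hquo
    exact Multiplicative.ofAdd.injective this
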